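/- Let Θ be an invertible skew-symmetric real 4×4 matrix and let f, g : ℝ⁴ → ℂ be Schwartz functions. Then for every z ∈ ℝ⁴, (f ×_Θ g)(z) = (2π)^{-8} ∬_{ℝ⁴×ℝ⁴} (Ff)(ξ) (Fg)(η) e^{i B(ξ+η, z)} e^{i B(ξ, Θη)} dξ dη, where the double integral on the right-hand side converges absolutely; i.e., in momentum space the deformation only inserts the phase factor e^{i B(ξ,Θη)} into the undeformed product. -/

import Mathlib

noncomputable section

open MeasureTheory Filter Matrix

/-- ℝ⁴ as a Euclidean space. -/
abbrev V4 : Type := EuclideanSpace ℝ (Fin 4)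

/-- The Minkowski bilinear form B(x,y) = -x⁰y⁰ + x¹y¹ + x²y² + x³y³. -/
def minkB (x y : V4) : ℝ := -(x 0 * y 0) + x 1 * y 1 + x 2 * y 2 + x 3 * y 3

/-- Matrix–vector multiplication Θx on ℝ⁴. -/
def thetaAct (Θ : Matrix (Fin 4) (Fin 4) ℝ) (x : V4) : V4 :=
  WithLp.toLp 2 (fun i => ∑ j, Θ i j * x j)

/-- The constant (2π)⁻⁴ as a complex number. -/
def c4 : ℂ := ((((2 * Real.pi) ^ 4)⁻¹ : ℝ) : ℂ)

/-- The Rieffel product (f ×_Θ g)(z) = (2π)⁻⁴ ∬ f(z+Θx) g(z+y) e^{-i B(x,y)} dx dy. -/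
def rieffel (Θ : Matrix (Fin 4) (Fin 4) ℝ) (f g : V4 → ℂ) (z : V4) : ℂ :=
  c4 * ∫ p : V4 × V4, f (z + thetaAct Θ p.1) * g (z + p.2) *
    Complex.exp (-Complex.I * (minkB p.1 p.2 : ℂ))

/-- The Minkowski Fourier transform (Fg)(ξ) = ∫ g(x) e^{-i B(ξ,x)} dx. -/
def minkFT (g : V4 → ℂ) (ξ : V4) : ℂ :=
  ∫ x : V4, g x * Complex.exp (-Complex.I * (minkB ξ x : ℂ))

/-- The constant (2π)⁻⁸ as a complex number. -/
def c8 : ℂ := ((((2 * Real.pi) ^ 8)⁻¹ : ℝ) : ℂ)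


/-! ### Auxiliary material -/


open Real FourierTransform RealInnerProductSpace

section Aux

/-- The linear map negating the time coordinate. -/
def jlin : V4 →ₗ[ℝ] V4 where
  toFun x := WithLp.toLp 2 (fun i => if i = 0 then -(x i) else x i)
  map_add' x y := by ext i; by_cases h : i = 0 <;> simp [h, add_comm]
  map_smul' c x := by ext i; by_cases h : i = 0 <;> simp [h] <;> ring

lemma jlin_invol : Function.Involutive jlin := by
  intro x; ext i; by_cases h : i = 0 <;> simp [jlin, h]

/-- The time-reflection linear isometry equivalence. -/
def jmap : V4 ≃ₗᵢ[ℝ] V4 where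
  toLinearEquiv := LinearEquiv.ofInvolutive jlin jlin_invol
  norm_map' x := by
    simp only [LinearEquiv.coe_mk, LinearEquiv.ofInvolutive]
    rw [EuclideanSpace.norm_eq, EuclideanSpace.norm_eq]
    congr 1
    refine Finset.sum_congr rfl fun i _ => ?_
    by_cases h : i = 0 <;> simp [jlin, h]

lemma jmap_apply (x : V4) (i : Fin 4) : jmap x i = if i = 0 then -(x i) else x i := rfl

lemma minkB_eq_inner (x y : V4) : minkB x y = ⟪jmap x, y⟫ := by
  simp [PiLp.inner_apply, Fin.sum_univ_four, minkB, jmap_apply]; ring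

lemma minkB_add_left (x y z : V4) : minkB (x + y) z = minkB x z + minkB y z := by
  simp [minkB]; ring

lemma minkB_add_right (x y z : V4) : minkB x (y + z) = minkB x y + minkB x z := by
  simp [minkB]; ring

lemma minkFT_eq (g : V4 → ℂ) (ξ : V4) :
    minkFT g ξ = 𝓕 g ((2 * π)⁻¹ • jmap ξ) := by
  rw [Real.fourier_eq', minkFT]
  refine integral_congr_ae (Eventually.of_forall fun x => ?_)
  have h1 : ⟪x, (2 * π)⁻¹ • jmap ξ⟫ = (2 * π)⁻¹ * minkB ξ x := by
    rw [real_inner_smul_right, real_inner_comm, ← minkB_eq_inner]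
  simp only [smul_eq_mul, h1]
  rw [mul_comm]
  congr 1
  rw [show -2 * π * ((2 * π)⁻¹ * minkB ξ x) = -minkB ξ x by field_simp]
  congr 1
  push_cast
  ring

lemma fourier_schwartz_integrable (φ : SchwartzMap V4 ℂ) : Integrable (𝓕 ⇑φ) := by
  have := (SchwartzMap.fourierTransformCLM ℂ φ).integrable (μ := volume)
  simpa [SchwartzMap.fourierTransformCLM_apply, SchwartzMap.fourier_coe] using this

lemma minkFT_integrable (φ : SchwartzMap V4 ℂ) : Integrable (minkFT ⇑φ) := by
  have hπ : (2 * π) ≠ 0 := by positivity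
  have h2 : Integrable (fun w : V4 => 𝓕 ⇑φ ((2 * π)⁻¹ • w)) :=
    (fourier_schwartz_integrable φ).comp_smul (inv_ne_zero hπ)
  have h3 := (MeasureTheory.integrable_comp jmap (fun w : V4 => 𝓕 ⇑φ ((2 * π)⁻¹ • w))).2 h2
  refine h3.congr (Eventually.of_forall fun ξ => ?_)
  simp [Function.comp, minkFT_eq]

lemma minkFT_inversion (φ : SchwartzMap V4 ℂ) (w : V4) :
    c4 * ∫ ξ : V4, minkFT ⇑φ ξ * Complex.exp (Complex.I * (minkB ξ w : ℂ)) = φ w := by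
  have hπ : (0:ℝ) < 2 * π := by positivity
  set h : V4 → ℂ := fun u => 𝓕 ⇑φ u * Complex.exp ((2 * π * ⟪u, w⟫ : ℝ) * Complex.I) with hh
  have step1 : ∀ ξ : V4, minkFT ⇑φ ξ * Complex.exp (Complex.I * (minkB ξ w : ℂ))
      = h ((2 * π)⁻¹ • jmap ξ) := by
    intro ξ
    rw [minkFT_eq, hh]
    congr 1
    rw [real_inner_smul_left, ← minkB_eq_inner]
    rw [show 2 * π * ((2 * π)⁻¹ * minkB ξ w) = minkB ξ w by field_simp]
    rw [mul_comm]
  have step2 : (∫ ξ : V4, minkFT ⇑φ ξ * Complex.exp (Complex.I * (minkB ξ w : ℂ)))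
      = ∫ ξ : V4, h ((2 * π)⁻¹ • jmap ξ) :=
    integral_congr_ae (Eventually.of_forall step1)
  have step3 : (∫ ξ : V4, h ((2 * π)⁻¹ • jmap ξ)) = ∫ v : V4, h ((2 * π)⁻¹ • v) :=
    MeasureTheory.integral_comp jmap (fun v => h ((2 * π)⁻¹ • v))
  have step4 : (∫ v : V4, h ((2 * π)⁻¹ • v)) = ((2 * π) ^ 4 : ℝ) • ∫ v, h v := by
    rw [Measure.integral_comp_inv_smul volume h (2 * π)]
    have h4 : Module.finrank ℝ V4 = 4 := finrank_euclideanSpace_fin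
    rw [h4, abs_of_pos (by positivity)]
  have step5 : (∫ v : V4, h v) = 𝓕⁻ (𝓕 ⇑φ) w := by
    rw [Real.fourierInv_eq']
    exact integral_congr_ae (Eventually.of_forall fun v => by
      rw [hh]; simp [smul_eq_mul, mul_comm])
  have step6 : 𝓕⁻ (𝓕 ⇑φ) w = φ w :=
    congrFun (φ.continuous.fourierInv_fourier_eq (φ.integrable (μ := volume))
      (fourier_schwartz_integrable φ)) w
  rw [step2, step3, step4, step5, step6, Complex.real_smul, c4]
  have hp : ((2 : ℂ) * (π : ℂ)) ^ 4 ≠ 0 := by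
    apply pow_ne_zero
    have : (2 * π : ℝ) ≠ 0 := by positivity
    exact_mod_cast this
  push_cast
  rw [← mul_assoc, inv_mul_cancel₀ hp, one_mul]

lemma integrable_comp_linearEquiv (e : V4 ≃ₗ[ℝ] V4) {h : V4 → ℂ} (hh : Integrable h) :
    Integrable (fun x => h (e x)) := by
  have hdet : LinearMap.det (e : V4 →ₗ[ℝ] V4) ≠ 0 := by
    simpa using e.isUnit_det'.ne_zero
  have hmap := Measure.map_linearMap_addHaar_eq_smul_addHaar (volume : Measure V4) hdet
  let m : V4 ≃ᵐ V4 := e.toContinuousLinearEquiv.toHomeomorph.toMeasurableEquiv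
  have hmeq : Measure.map (⇑m) (volume : Measure V4)
      = Measure.map (⇑(e : V4 →ₗ[ℝ] V4)) (volume : Measure V4) := rfl
  have h1 : Integrable h (Measure.map (⇑m) (volume : Measure V4)) := by
    rw [hmeq, hmap]
    exact hh.smul_measure ENNReal.ofReal_ne_top
  exact (integrable_map_equiv m h).1 h1

lemma thetaAct_eq_mulVec (M : Matrix (Fin 4) (Fin 4) ℝ) (x : V4) :
    thetaAct M x = (M.mulVec x : Fin 4 → ℝ) := rfl

lemma integrable_comp_thetaAct (Θ : Matrix (Fin 4) (Fin 4) ℝ) (hinv : IsUnit Θ)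
    {h : V4 → ℂ} (hh : Integrable h) : Integrable (fun x => h (thetaAct Θ x)) := by
  have hdet : IsUnit Θ.det := (Matrix.isUnit_iff_isUnit_det Θ).1 hinv
  let e : V4 ≃ₗ[ℝ] V4 :=
    { toFun := thetaAct Θ
      invFun := thetaAct Θ⁻¹
      left_inv := fun x => by
        ext i; simp [thetaAct_eq_mulVec, Matrix.mulVec_mulVec, Matrix.nonsing_inv_mul Θ hdet]
      right_inv := fun x => by
        ext i; simp [thetaAct_eq_mulVec, Matrix.mulVec_mulVec, Matrix.mul_nonsing_inv Θ hdet]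
      map_add' := fun x y => by
        ext i; simp [thetaAct, mul_add, Finset.sum_add_distrib]
      map_smul' := fun c x => by
        ext i; simp [thetaAct, Finset.mul_sum]; ring_nf
        exact Finset.sum_congr rfl fun j _ => by ring }
  exact integrable_comp_linearEquiv e hh

lemma integrable_mul_phase {α : Type*} [MeasurableSpace α] [TopologicalSpace α]
    [OpensMeasurableSpace α] {μ : Measure α} {h : α → ℂ}
    (hh : Integrable h μ) {p : α → ℂ} (hp : Continuous p) (hre : ∀ x, (p x).re = 0) :
    Integrable (fun x => h x * Complex.exp (p x)) μ := by
  have hb : ∀ x, ‖Complex.exp (p x)‖ ≤ 1 := fun x => by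
    rw [Complex.norm_exp, hre x, Real.exp_zero]
  have := hh.bdd_mul ((Complex.continuous_exp.comp hp).aestronglyMeasurable) (Eventually.of_forall hb)
  exact this.congr (Eventually.of_forall fun x => mul_comm _ _)

end Aux


/-- momentum-space representation of the Rieffel product:
(f ×_Θ g)(z) = (2π)⁻⁸ ∬ (Ff)(ξ)(Fg)(η) e^{i B(ξ+η,z)} e^{i B(ξ,Θη)} dξ dη, with the
double integral absolutely convergent. -/
theorem rieffel_momentum_space (Θ : Matrix (Fin 4) (Fin 4) ℝ)
    (hinv : IsUnit Θ) (hskew : Θᵀ = -Θ)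
    (f g : SchwartzMap V4 ℂ) (z : V4) :
    Integrable (fun q : V4 × V4 =>
      minkFT (⇑f) q.1 * minkFT (⇑g) q.2 * Complex.exp (Complex.I * (minkB (q.1 + q.2) z : ℂ)) *
        Complex.exp (Complex.I * (minkB q.1 (thetaAct Θ q.2) : ℂ))) ∧
    rieffel Θ (⇑f) (⇑g) z =
      c8 * ∫ q : V4 × V4, minkFT (⇑f) q.1 * minkFT (⇑g) q.2 *
        Complex.exp (Complex.I * (minkB (q.1 + q.2) z : ℂ)) *
        Complex.exp (Complex.I * (minkB q.1 (thetaAct Θ q.2) : ℂ)) := by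
  set F := minkFT ⇑f with hF
  set G := minkFT ⇑g with hG
  -- continuity of the phases
  have hc1 : Continuous fun q : V4 × V4 => Complex.I * ((minkB (q.1 + q.2) z : ℝ) : ℂ) := by
    apply continuous_const.mul
    apply Complex.continuous_ofReal.comp
    unfold minkB; fun_prop
  have hc2 : Continuous fun q : V4 × V4 => Complex.I * ((minkB q.1 (thetaAct Θ q.2) : ℝ) : ℂ) := by
    apply continuous_const.mul
    apply Complex.continuous_ofReal.comp
    unfold minkB thetaAct; fun_prop
  have hc0 : Continuous fun q : V4 × V4 => -Complex.I * ((minkB q.1 q.2 : ℝ) : ℂ) := by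
    apply continuous_const.mul
    apply Complex.continuous_ofReal.comp
    unfold minkB; fun_prop
  have hre : ∀ (r : ℝ), (Complex.I * (r : ℂ)).re = 0 := fun r => by simp
  have hre' : ∀ (r : ℝ), (-Complex.I * (r : ℂ)).re = 0 := fun r => by simp
  -- target integrability
  have hFi : Integrable F := minkFT_integrable f
  have hGi : Integrable G := minkFT_integrable g
  have hFG : Integrable (fun q : V4 × V4 => F q.1 * G q.2) := by
    rw [Measure.volume_eq_prod]; exact hFi.mul_prod hGi
  have htarget : Integrable (fun q : V4 × V4 =>
      F q.1 * G q.2 * Complex.exp (Complex.I * (minkB (q.1 + q.2) z : ℂ)) *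
        Complex.exp (Complex.I * (minkB q.1 (thetaAct Θ q.2) : ℂ))) := by
    exact integrable_mul_phase
      (integrable_mul_phase hFG hc1 (fun q => hre _)) hc2 (fun q => hre _)
  refine ⟨htarget, ?_⟩
  -- integrability of the Rieffel integrand
  have hfz : Integrable (fun x : V4 => f (z + thetaAct Θ x)) :=
    integrable_comp_thetaAct Θ hinv ((f.integrable (μ := volume)).comp_add_left z)
  have hgz : Integrable (fun y : V4 => g (z + y)) :=
    (g.integrable (μ := volume)).comp_add_left z
  have hΦ : Integrable (fun p : V4 × V4 => f (z + thetaAct Θ p.1) * g (z + p.2) *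
      Complex.exp (-Complex.I * (minkB p.1 p.2 : ℂ))) := by
    refine integrable_mul_phase ?_ hc0 (fun q => hre' _)
    rw [Measure.volume_eq_prod]; exact hfz.mul_prod hgz
  -- inner integral over y
  have hinner : ∀ x : V4, (∫ y : V4, g (z + y) * Complex.exp (-Complex.I * (minkB x y : ℂ)))
      = Complex.exp (Complex.I * (minkB x z : ℂ)) * G x := by
    intro x
    have h0 : G x = ∫ y : V4, g (z + y) *
        Complex.exp (-Complex.I * (minkB x (z + y) : ℂ)) := by
      rw [hG, minkFT]
      exact (integral_add_left_eq_self
        (fun t => g t * Complex.exp (-Complex.I * (minkB x t : ℂ))) z).symm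
    have key : Complex.exp (Complex.I * (minkB x z : ℂ)) *
        Complex.exp (-Complex.I * (minkB x z : ℂ)) = 1 := by
      rw [← Complex.exp_add]
      ring_nf
      exact Complex.exp_zero
    rw [h0, ← integral_const_mul]
    refine (integral_congr_ae (Eventually.of_forall fun y => ?_)).symm
    rw [minkB_add_right]
    rw [show (-Complex.I * ((minkB x z + minkB x y : ℝ) : ℂ))
        = (-Complex.I * (minkB x z : ℂ)) + (-Complex.I * (minkB x y : ℂ)) by push_cast; ring]
    rw [Complex.exp_add]
    linear_combination (g (z + y) * Complex.exp (-Complex.I * ((minkB x y : ℝ) : ℂ))) * key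
  -- expand rieffel as iterated integral
  have hsplit : rieffel Θ (⇑f) (⇑g) z = c4 * ∫ x : V4, ∫ y : V4,
      f (z + thetaAct Θ x) * g (z + y) * Complex.exp (-Complex.I * (minkB x y : ℂ)) := by
    rw [rieffel]
    congr 1
    rw [Measure.volume_eq_prod] at hΦ ⊢
    exact integral_prod _ hΦ
  -- pointwise identity for the phase recombination
  have hphase : ∀ x ξ : V4,
      F ξ * Complex.exp (Complex.I * (minkB ξ (z + thetaAct Θ x) : ℂ)) *
        (Complex.exp (Complex.I * (minkB x z : ℂ)) * G x)
      = F ξ * G x * Complex.exp (Complex.I * (minkB (ξ + x) z : ℂ)) *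
        Complex.exp (Complex.I * (minkB ξ (thetaAct Θ x) : ℂ)) := by
    intro x ξ
    rw [minkB_add_right, minkB_add_left]
    rw [show (Complex.I * ((minkB ξ z + minkB ξ (thetaAct Θ x) : ℝ) : ℂ))
        = Complex.I * (minkB ξ z : ℂ) + Complex.I * (minkB ξ (thetaAct Θ x) : ℂ)
        by push_cast; ring]
    rw [show (Complex.I * ((minkB ξ z + minkB x z : ℝ) : ℂ))
        = Complex.I * (minkB ξ z : ℂ) + Complex.I * (minkB x z : ℂ) by push_cast; ring]
    rw [Complex.exp_add, Complex.exp_add]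
    ring
  -- the main chain
  have hx : ∀ x : V4, (∫ y : V4,
      f (z + thetaAct Θ x) * g (z + y) * Complex.exp (-Complex.I * (minkB x y : ℂ)))
      = c4 * ∫ ξ : V4, F ξ * G x * Complex.exp (Complex.I * (minkB (ξ + x) z : ℂ)) *
        Complex.exp (Complex.I * (minkB ξ (thetaAct Θ x) : ℂ)) := by
    intro x
    have e1 : (∫ y : V4,
        f (z + thetaAct Θ x) * g (z + y) * Complex.exp (-Complex.I * (minkB x y : ℂ)))
        = f (z + thetaAct Θ x) * (Complex.exp (Complex.I * (minkB x z : ℂ)) * G x) := by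
      rw [← hinner x, ← integral_const_mul]
      exact integral_congr_ae (Eventually.of_forall fun y => by ring)
    rw [e1, ← minkFT_inversion f (z + thetaAct Θ x), ← hF]
    rw [mul_assoc, ← integral_mul_const]
    congr 1
    exact integral_congr_ae (Eventually.of_forall fun ξ => hphase x ξ)
  -- swap and conclude
  have hswap : Integrable (Function.uncurry fun x ξ : V4 =>
      F ξ * G x * Complex.exp (Complex.I * (minkB (ξ + x) z : ℂ)) *
        Complex.exp (Complex.I * (minkB ξ (thetaAct Θ x) : ℂ))) ((volume : Measure V4).prod volume) := by
    have := htarget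
    rw [Measure.volume_eq_prod] at this
    exact this.swap
  have huncurry : Integrable (Function.uncurry fun ξ x : V4 =>
      F ξ * G x * Complex.exp (Complex.I * (minkB (ξ + x) z : ℂ)) *
        Complex.exp (Complex.I * (minkB ξ (thetaAct Θ x) : ℂ))) ((volume : Measure V4).prod volume) := by
    have := htarget
    rw [Measure.volume_eq_prod] at this
    exact this.congr (Eventually.of_forall fun q => rfl)
  calc rieffel Θ (⇑f) (⇑g) z
      = c4 * ∫ x : V4, c4 * ∫ ξ : V4,
          F ξ * G x * Complex.exp (Complex.I * (minkB (ξ + x) z : ℂ)) *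
          Complex.exp (Complex.I * (minkB ξ (thetaAct Θ x) : ℂ)) := by
        rw [hsplit]
        congr 1
        exact integral_congr_ae (Eventually.of_forall hx)
    _ = c4 * (c4 * ∫ x : V4, ∫ ξ : V4,
          F ξ * G x * Complex.exp (Complex.I * (minkB (ξ + x) z : ℂ)) *
          Complex.exp (Complex.I * (minkB ξ (thetaAct Θ x) : ℂ))) := by
        rw [integral_const_mul]
    _ = c4 * (c4 * ∫ ξ : V4, ∫ x : V4,
          F ξ * G x * Complex.exp (Complex.I * (minkB (ξ + x) z : ℂ)) *
          Complex.exp (Complex.I * (minkB ξ (thetaAct Θ x) : ℂ))) := by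
        rw [integral_integral_swap hswap]
    _ = c4 * (c4 * ∫ q : V4 × V4,
          F q.1 * G q.2 * Complex.exp (Complex.I * (minkB (q.1 + q.2) z : ℂ)) *
          Complex.exp (Complex.I * (minkB q.1 (thetaAct Θ q.2) : ℂ))) := by
        rw [integral_integral huncurry, ← Measure.volume_eq_prod]
    _ = c8 * ∫ q : V4 × V4,
          F q.1 * G q.2 * Complex.exp (Complex.I * (minkB (q.1 + q.2) z : ℂ)) *
          Complex.exp (Complex.I * (minkB q.1 (thetaAct Θ q.2) : ℂ)) := by
        rw [← mul_assoc]
        congr 1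
        rw [c4, c8, ← Complex.ofReal_mul]
        congr 1
        rw [← mul_inv, ← pow_add]
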